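/- For any fixed C ≥ 0 (possibly +∞) and any integer T ≥ 1, the map z ↦ Ψ_+^{-1}(z,C) is non-decreasing with respect to the partial order ⪰ on [0,1]^T; that is, if z ⪰ z' then Ψ_+^{-1}(z,C) ≥ Ψ_+^{-1}(z',C). -/

import Mathlib

open MeasureTheory Set

/-- Extended-real logarithm: `log ⊤ = ⊤`, `log x = -∞` for `x ≤ 0` (in particular `log 0 = -∞`). -/
noncomputable def elog (x : EReal) : EReal :=
  if x = ⊤ then ⊤ else if x ≤ 0 then ⊥ else ((Real.log x.toReal : ℝ) : EReal)

/-- Lower endpoint `-1/(1-μ)` of the betting interval, with the convention `1/0 = +∞`. -/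
noncomputable def betLower (μ : ℝ) : EReal := if μ = 1 then ⊥ else ((-(1 - μ)⁻¹ : ℝ) : EReal)

/-- Upper endpoint `1/μ` of the betting interval, with the convention `1/0 = +∞`. -/
noncomputable def betUpper (μ : ℝ) : EReal := if μ = 0 then ⊤ else ((μ⁻¹ : ℝ) : EReal)

/-- The betting interval `A_μ = [-1/(1-μ), 1/μ]` (as a set of extended reals). -/
noncomputable def betSet (μ : ℝ) : Set EReal := Set.Icc (betLower μ) (betUpper μ)

/-- `(1/T) ∑_t log(1 + α (z_t - μ))`, with EReal conventions (`0 * ±∞ = 0`, `log 0 = -∞`). -/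
noncomputable def betTerm {T : ℕ} (z : Fin T → ℝ) (μ : ℝ) (α : EReal) : EReal :=
  (((T : ℝ)⁻¹ : ℝ) : EReal) * ∑ t : Fin T, elog (1 + α * ((z t - μ : ℝ) : EReal))

/-- `Ψ(z, μ) = sup_{α ∈ A_μ} (1/T) ∑_t log(1 + α (z_t - μ))`. -/
noncomputable def Psi {T : ℕ} (z : Fin T → ℝ) (μ : ℝ) : EReal :=
  ⨆ α ∈ betSet μ, betTerm z μ α

/-- `μ_z = (1/T) ∑_t z_t`. -/
noncomputable def muz {T : ℕ} (z : Fin T → ℝ) : ℝ := (T : ℝ)⁻¹ * ∑ t, z t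

/-- The upper inverse `Ψ_+^{-1}(z, C) = sup {μ ∈ [0,1] : Ψ(z,μ) ≤ C}`. -/
noncomputable def PsiInvPlus {T : ℕ} (z : Fin T → ℝ) (C : EReal) : ℝ :=
  sSup {μ : ℝ | μ ∈ Set.Icc (0 : ℝ) 1 ∧ Psi z μ ≤ C}

/-- The lower inverse `Ψ_-^{-1}(z, C) = inf {μ ∈ [0,1] : Ψ(z,μ) ≤ C}`. -/
noncomputable def PsiInvMinus {T : ℕ} (z : Fin T → ℝ) (C : EReal) : ℝ :=
  sInf {μ : ℝ | μ ∈ Set.Icc (0 : ℝ) 1 ∧ Psi z μ ≤ C}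

lemma elog_mono : Monotone elog := by
  intro x y hxy
  unfold elog
  by_cases hy : y = ⊤
  · simp [hy]
  · have hx : x ≠ ⊤ := fun h => hy (top_le_iff.mp (h ▸ hxy))
    rw [if_neg hx, if_neg hy]
    by_cases hx0 : x ≤ 0
    · simp [hx0]
    · have hy0 : ¬ y ≤ 0 := fun h => hx0 (hxy.trans h)
      rw [if_neg hx0, if_neg hy0]
      push_neg at hx0
      have hxb : x ≠ ⊥ := ne_bot_of_gt hx0
      have hxpos : 0 < x.toReal := by
        rw [← EReal.coe_toReal hx hxb] at hx0
        exact_mod_cast hx0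
      exact EReal.coe_le_coe_iff.mpr
        (Real.log_le_log hxpos (EReal.toReal_le_toReal hxy hxb hy))

lemma elog_one : elog 1 = 0 := by
  have h1 : (1 : EReal) = ((1:ℝ) : EReal) := rfl
  rw [elog, h1, if_neg (EReal.coe_ne_top 1), if_neg (by norm_num), EReal.toReal_coe,
    Real.log_one, EReal.coe_zero]

lemma elog_coe_le (y : ℝ) : elog (y : EReal) ≤ ((y - 1 : ℝ) : EReal) := by
  unfold elog
  rw [if_neg (EReal.coe_ne_top y)]
  by_cases h : (y : EReal) ≤ 0
  · simp [h]
  · rw [if_neg h, EReal.toReal_coe, EReal.coe_le_coe_iff]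
    have hy : 0 < y := by exact_mod_cast not_le.mp h
    linarith [Real.log_le_sub_one_of_pos hy]

lemma ereal_mul_antitone {α : EReal} (hα : α ≤ 0) {a b : ℝ} (hab : b ≤ a) :
    α * (a : EReal) ≤ α * (b : EReal) := by
  induction α with
  | bot =>
    rcases lt_trichotomy b 0 with hb | hb | hb
    · rw [EReal.bot_mul_of_neg (x := (b:EReal)) (by exact_mod_cast hb)]; exact le_top
    · subst hb
      rw [EReal.coe_zero, mul_zero]
      rcases eq_or_lt_of_le hab with ha | ha
      · rw [← ha, EReal.coe_zero, mul_zero]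
      · rw [EReal.bot_mul_of_pos (x := (a:EReal)) (by exact_mod_cast ha)]; exact bot_le
    · rw [EReal.bot_mul_of_pos (x := (a:EReal)) (by exact_mod_cast hb.trans_le hab),
        EReal.bot_mul_of_pos (x := (b:EReal)) (by exact_mod_cast hb)]
  | coe r =>
    rw [← EReal.coe_mul, ← EReal.coe_mul, EReal.coe_le_coe_iff]
    exact mul_le_mul_of_nonpos_left hab (by exact_mod_cast hα)
  | top => exact absurd hα (by simp)

lemma coe_sum {n : ℕ} (f : Fin n → ℝ) :
    ((∑ t, f t : ℝ) : EReal) = ∑ t, ((f t : ℝ) : EReal) :=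
  map_sum (⟨⟨Real.toEReal, EReal.coe_zero⟩, EReal.coe_add⟩ : ℝ →+ EReal) f Finset.univ

lemma muz_mem {T : ℕ} (hT : 1 ≤ T) (z : Fin T → ℝ) (hz : ∀ t, z t ∈ Set.Icc (0:ℝ) 1) :
    muz z ∈ Set.Icc (0:ℝ) 1 := by
  have hTpos : (0:ℝ) < T := by exact_mod_cast hT
  constructor
  · exact mul_nonneg (inv_nonneg.2 hTpos.le) (Finset.sum_nonneg fun t _ => (hz t).1)
  · have h1 : ∑ t, z t ≤ (T:ℝ) := by
      calc ∑ t, z t ≤ ∑ _t : Fin T, (1:ℝ) := Finset.sum_le_sum fun t _ => (hz t).2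
        _ = T := by simp
    calc muz z ≤ (T:ℝ)⁻¹ * T := by
          rw [muz]; gcongr
      _ = 1 := inv_mul_cancel₀ hTpos.ne'

lemma sum_eq {T : ℕ} (hT : 1 ≤ T) (z : Fin T → ℝ) : ∑ t, z t = (T:ℝ) * muz z := by
  have hTpos : (0:ℝ) < T := by exact_mod_cast hT
  rw [muz]; field_simp

lemma betTerm_nonpos {T : ℕ} (hT : 1 ≤ T) (z : Fin T → ℝ)
    (hz : ∀ t, z t ∈ Set.Icc (0:ℝ) 1) (μ : ℝ) (α : EReal) (hα : α ∈ betSet μ)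
    (hsign : (0 ≤ α ∧ muz z ≤ μ) ∨ (α ≤ 0 ∧ μ ≤ muz z)) :
    betTerm z μ α ≤ 0 := by
  have hTpos : (0:ℝ) < T := by exact_mod_cast hT
  induction α with
  | top =>
    have hμ0 : μ = 0 := by
      by_contra h
      rw [betSet, Set.mem_Icc, betUpper, if_neg h] at hα
      exact EReal.coe_ne_top _ (top_le_iff.mp hα.2)
    subst hμ0
    rcases hsign with ⟨_, hμ⟩ | ⟨h0, _⟩
    · have hmz : muz z = 0 := le_antisymm hμ (muz_mem hT z hz).1
      have hsum0 : ∑ t, z t = 0 := by rw [sum_eq hT z, hmz, mul_zero]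
      have hz0 : ∀ t, z t = 0 := fun t =>
        (Finset.sum_eq_zero_iff_of_nonneg (fun t _ => (hz t).1)).mp hsum0 t (Finset.mem_univ t)
      rw [betTerm]
      have hterm : ∀ t : Fin T, elog (1 + (⊤:EReal) * ((z t - 0 : ℝ) : EReal)) = 0 := by
        intro t
        rw [hz0 t]
        norm_num
        exact elog_one
      rw [Finset.sum_congr rfl fun t _ => hterm t, Finset.sum_const, smul_zero, mul_zero]
    · exact absurd h0 (by simp)
  | bot =>
    have hμ1 : μ = 1 := by
      by_contra h
      rw [betSet, Set.mem_Icc, betLower, if_neg h] at hα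
      exact EReal.coe_ne_bot _ (le_bot_iff.mp hα.1)
    subst hμ1
    rcases hsign with ⟨h0, _⟩ | ⟨_, hμ⟩
    · exact absurd h0 (by simp)
    · have hmz : muz z = 1 := le_antisymm (muz_mem hT z hz).2 hμ
      have hsum1 : ∑ t, (1 - z t) = 0 := by
        rw [Finset.sum_sub_distrib, Finset.sum_const, Finset.card_univ, Fintype.card_fin,
          nsmul_eq_mul, mul_one, sum_eq hT z, hmz, mul_one, sub_self]
      have hz1 : ∀ t, z t = 1 := by
        intro t
        have := (Finset.sum_eq_zero_iff_of_nonneg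
          (fun t _ => by linarith [(hz t).2] : ∀ t ∈ Finset.univ, (0:ℝ) ≤ 1 - z t)).mp
          hsum1 t (Finset.mem_univ t)
        linarith
      rw [betTerm]
      have hterm : ∀ t : Fin T, elog (1 + (⊥:EReal) * ((z t - 1 : ℝ) : EReal)) = 0 := by
        intro t
        rw [hz1 t]
        norm_num
        exact elog_one
      rw [Finset.sum_congr rfl fun t _ => hterm t, Finset.sum_const, smul_zero, mul_zero]
  | coe r =>
    have hterm : ∀ t : Fin T, elog (1 + (r : EReal) * ((z t - μ : ℝ) : EReal))
        ≤ ((r * (z t - μ) : ℝ) : EReal) := by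
      intro t
      have h1 : (1:EReal) + (r:EReal) * ((z t - μ : ℝ) : EReal)
          = ((1 + r * (z t - μ) : ℝ) : EReal) := by norm_cast
      rw [h1]
      have h2 := elog_coe_le (1 + r * (z t - μ))
      rwa [add_sub_cancel_left] at h2
    have hsumle : ∑ t, elog (1 + (r : EReal) * ((z t - μ : ℝ) : EReal))
        ≤ ((∑ t, r * (z t - μ) : ℝ) : EReal) := by
      rw [coe_sum]
      exact Finset.sum_le_sum fun t _ => hterm t
    have hS : ∑ t, r * (z t - μ) = r * ((T:ℝ) * muz z - (T:ℝ) * μ) := by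
      rw [← Finset.mul_sum, Finset.sum_sub_distrib, Finset.sum_const, Finset.card_univ,
        Fintype.card_fin, nsmul_eq_mul, sum_eq hT z]
    calc betTerm z μ (r : EReal)
        ≤ (((T:ℝ)⁻¹ : ℝ) : EReal) * ((∑ t, r * (z t - μ) : ℝ) : EReal) := by
          rw [betTerm]
          exact mul_le_mul_of_nonneg_left hsumle (EReal.coe_nonneg.2 (inv_nonneg.2 hTpos.le))
      _ = (((T:ℝ)⁻¹ * ∑ t, r * (z t - μ) : ℝ) : EReal) := (EReal.coe_mul _ _).symm
      _ ≤ 0 := by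
          rw [EReal.coe_nonpos, hS]
          rcases hsign with ⟨h0, hμ⟩ | ⟨h0, hμ⟩
          · have hr : 0 ≤ r := EReal.coe_nonneg.1 h0
            have : r * ((T:ℝ) * muz z - (T:ℝ) * μ) ≤ 0 :=
              mul_nonpos_of_nonneg_of_nonpos hr (by nlinarith)
            exact mul_nonpos_of_nonneg_of_nonpos (inv_nonneg.2 hTpos.le) this
          · have hr : r ≤ 0 := EReal.coe_nonpos.1 h0
            have : r * ((T:ℝ) * muz z - (T:ℝ) * μ) ≤ 0 :=
              mul_nonpos_of_nonpos_of_nonneg hr (by nlinarith)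
            exact mul_nonpos_of_nonneg_of_nonpos (inv_nonneg.2 hTpos.le) this

lemma betTerm_mono_nonpos {T : ℕ} (z z' : Fin T → ℝ) (hord : ∀ t, z' t ≤ z t) (μ : ℝ)
    {α : EReal} (hα : α ≤ 0) : betTerm z μ α ≤ betTerm z' μ α := by
  rw [betTerm, betTerm]
  refine mul_le_mul_of_nonneg_left ?_ (EReal.coe_nonneg.2 (inv_nonneg.2 (Nat.cast_nonneg T)))
  refine Finset.sum_le_sum fun t _ => elog_mono ?_
  exact add_le_add_right (ereal_mul_antitone hα (by linarith [hord t])) 1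

/-- For fixed `C ≥ 0` (possibly `+∞`), `z ↦ Ψ_+^{-1}(z, C)` is non-decreasing w.r.t. the
coordinatewise order `⪰` on `[0,1]^T`. -/
theorem psiInvPlus_mono {T : ℕ} (hT : 1 ≤ T) (C : EReal) (hC : 0 ≤ C)
    (z z' : Fin T → ℝ)
    (hz : ∀ t, z t ∈ Set.Icc (0 : ℝ) 1) (hz' : ∀ t, z' t ∈ Set.Icc (0 : ℝ) 1)
    (hord : ∀ t, z' t ≤ z t) :
    PsiInvPlus z' C ≤ PsiInvPlus z C := by
  have hpsi_mu : ∀ (w : Fin T → ℝ), (∀ t, w t ∈ Set.Icc (0:ℝ) 1) → Psi w (muz w) ≤ C := by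
    intro w hw
    refine le_trans (iSup₂_le fun α hα => ?_) hC
    rcases le_total 0 α with h0 | h0
    · exact betTerm_nonpos hT w hw (muz w) α hα (Or.inl ⟨h0, le_refl _⟩)
    · exact betTerm_nonpos hT w hw (muz w) α hα (Or.inr ⟨h0, le_refl _⟩)
  have hbdd : BddAbove {μ : ℝ | μ ∈ Set.Icc (0 : ℝ) 1 ∧ Psi z μ ≤ C} :=
    ⟨1, fun μ hμ => hμ.1.2⟩
  have hmem : muz z ∈ {μ : ℝ | μ ∈ Set.Icc (0 : ℝ) 1 ∧ Psi z μ ≤ C} :=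
    ⟨muz_mem hT z hz, hpsi_mu z hz⟩
  have hmem' : muz z' ∈ {μ : ℝ | μ ∈ Set.Icc (0 : ℝ) 1 ∧ Psi z' μ ≤ C} :=
    ⟨muz_mem hT z' hz', hpsi_mu z' hz'⟩
  refine csSup_le ⟨muz z', hmem'⟩ fun μ hμ => ?_
  rcases le_or_gt μ (muz z) with h | h
  · exact h.trans (le_csSup hbdd hmem)
  · refine le_csSup hbdd ⟨hμ.1, ?_⟩
    refine iSup₂_le fun α hα => ?_
    rcases le_total α 0 with h0 | h0
    · refine le_trans (betTerm_mono_nonpos z z' hord μ h0) (le_trans ?_ hμ.2)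
      exact le_iSup₂ (f := fun α _ => betTerm z' μ α) α hα
    · exact le_trans (betTerm_nonpos hT z hz μ α hα (Or.inl ⟨h0, h.le⟩)) hC
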